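/- Let g ∈ C_2(V) with δg ∈ C_3^{1+}(V), and suppose g = δf + ΛδG decomposition exists, i.e. there is a unique f ∈ C_1(V) with f_0 = 0 and a unique decomposition g = δf + Λδg where Λ : ZC_3^{1+}(V) → C_2^{1+}(V) is the unique right inverse of δ. Then (δf)_{ts} = lim_{|Π_{ts}|→0} Σ_{i=0}^{n−1} g_{t_{i+1} t_i}, where the limit is over partitions Π_{ts} = {s = t_0 < t_1 < ⋯ < t_n = t} with mesh tending to zero. -/
import Mathlib


/-- Riemann-sum representation of the regular part: if `g ∈ C₂(V)` decomposes as
`g = δf + r` with `f_0 = 0` and `r = Λδg ∈ C₂^{1+}(V)`, then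
`(δf)_{ts} = lim_{|Π_{ts}|→0} Σᵢ g_{t_{i+1} tᵢ}` over partitions
`Π_{ts} = {s = t₀ < t₁ < ⋯ < tₙ = t}` of `[s,t]` with mesh tending to zero. -/
theorem delta_f_eq_limit_of_riemann_sums {V : Type*} [NormedAddCommGroup V]
    (T : ℝ) (hT : 0 < T) (g : ℝ → ℝ → V) (f : ℝ → V) (r : ℝ → ℝ → V)
    (hf0 : f 0 = 0)
    (hdecomp : ∀ t ∈ Set.Icc (0 : ℝ) T, ∀ s ∈ Set.Icc (0 : ℝ) T,
      g t s = (f t - f s) + r t s)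
    (hr : ∃ ν : ℝ, 1 < ν ∧ ∃ C : ℝ, ∀ t ∈ Set.Icc (0 : ℝ) T, ∀ s ∈ Set.Icc (0 : ℝ) T,
      ‖r t s‖ ≤ C * |t - s| ^ ν) :
    ∀ s ∈ Set.Icc (0 : ℝ) T, ∀ t ∈ Set.Icc (0 : ℝ) T, s ≤ t →
      ∀ ε > (0 : ℝ), ∃ δ > (0 : ℝ), ∀ (n : ℕ) (P : ℕ → ℝ), 0 < n →
        P 0 = s → P n = t → (∀ i < n, P i < P (i + 1)) →
        (∀ i < n, P (i + 1) - P i < δ) →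
        ‖(∑ i ∈ Finset.range n, g (P (i + 1)) (P i)) - (f t - f s)‖ < ε := by
  obtain ⟨ν, hν, C, hC⟩ := hr
  intro s hs t ht hst ε hε
  set C' := max C 0 with hC'def
  have hC'0 : 0 ≤ C' := le_max_right _ _
  have hC'bound : ∀ t' ∈ Set.Icc (0:ℝ) T, ∀ s' ∈ Set.Icc (0:ℝ) T,
      ‖r t' s'‖ ≤ C' * |t' - s'| ^ ν := by
    intro t' ht' s' hs'
    exact le_trans (hC t' ht' s' hs')
      (mul_le_mul_of_nonneg_right (le_max_left _ _)
        (Real.rpow_nonneg (abs_nonneg _) _))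
  set A := ε / ((C' + 1) * (T + 1)) with hAdef
  have hApos : 0 < A := div_pos hε (by positivity)
  have hν1 : (0:ℝ) < ν - 1 := by linarith
  refine ⟨A ^ (ν - 1)⁻¹, Real.rpow_pos_of_pos hApos _, ?_⟩
  intro n P hn hP0 hPn hinc hmesh
  have hδpow : (A ^ (ν - 1)⁻¹) ^ (ν - 1) = A :=
    Real.rpow_inv_rpow hApos.le (ne_of_gt hν1)
  have hmono : ∀ i j, i ≤ j → j ≤ n → P i ≤ P j := by
    intro i j hij hjn
    induction j with
    | zero => simp [Nat.le_zero.mp hij]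
    | succ k ih =>
      rcases Nat.eq_or_lt_of_le hij with h | h
      · rw [h]
      · exact le_trans (ih (Nat.lt_succ_iff.mp h) (le_trans (Nat.le_succ k) hjn))
          (le_of_lt (hinc k (Nat.lt_of_succ_le hjn)))
  have hrange : ∀ i ≤ n, P i ∈ Set.Icc (0:ℝ) T := by
    intro i hi
    constructor
    · calc (0:ℝ) ≤ s := hs.1
        _ = P 0 := hP0.symm
        _ ≤ P i := hmono 0 i (Nat.zero_le _) hi
    · calc P i ≤ P n := hmono i n hi le_rfl
        _ = t := hPn
        _ ≤ T := ht.2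
  have hsum : (∑ i ∈ Finset.range n, g (P (i+1)) (P i))
      = (f t - f s) + ∑ i ∈ Finset.range n, r (P (i+1)) (P i) := by
    have hcongr : ∀ i ∈ Finset.range n,
        g (P (i+1)) (P i) = (f (P (i+1)) - f (P i)) + r (P (i+1)) (P i) := by
      intro i hi
      have hi' := Finset.mem_range.mp hi
      exact hdecomp _ (hrange _ hi') _ (hrange _ (le_of_lt hi'))
    rw [Finset.sum_congr rfl hcongr, Finset.sum_add_distrib,
      Finset.sum_range_sub (fun i => f (P i)), hP0, hPn]
  rw [hsum, add_sub_cancel_left]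
  have hterm : ∀ i ∈ Finset.range n,
      ‖r (P (i+1)) (P i)‖ ≤ C' * A * (P (i+1) - P i) := by
    intro i hi
    have hi' := Finset.mem_range.mp hi
    have hΔpos : 0 < P (i+1) - P i := sub_pos.mpr (hinc i hi')
    have hΔδ : P (i+1) - P i ≤ A ^ (ν - 1)⁻¹ := le_of_lt (hmesh i hi')
    have habs : |P (i+1) - P i| = P (i+1) - P i := abs_of_pos hΔpos
    have h1 : ‖r (P (i+1)) (P i)‖ ≤ C' * (P (i+1) - P i) ^ ν := by
      have := hC'bound _ (hrange _ hi') _ (hrange _ (le_of_lt hi'))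
      rwa [habs] at this
    have h2 : (P (i+1) - P i) ^ ν
        = (P (i+1) - P i) ^ (ν - 1) * (P (i+1) - P i) := by
      have h := Real.rpow_add hΔpos (ν - 1) 1
      rw [Real.rpow_one] at h
      rw [show ν = ν - 1 + 1 by ring, h]
      norm_num
    have h3 : (P (i+1) - P i) ^ (ν - 1) ≤ A :=
      hδpow ▸ Real.rpow_le_rpow hΔpos.le hΔδ hν1.le
    calc ‖r (P (i+1)) (P i)‖ ≤ C' * ((P (i+1) - P i) ^ (ν - 1) * (P (i+1) - P i)) := by
          rw [← h2]; exact h1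
      _ ≤ C' * (A * (P (i+1) - P i)) := by
          apply mul_le_mul_of_nonneg_left _ hC'0
          exact mul_le_mul_of_nonneg_right h3 hΔpos.le
      _ = C' * A * (P (i+1) - P i) := by ring
  calc ‖∑ i ∈ Finset.range n, r (P (i+1)) (P i)‖
      ≤ ∑ i ∈ Finset.range n, ‖r (P (i+1)) (P i)‖ := norm_sum_le _ _
    _ ≤ ∑ i ∈ Finset.range n, C' * A * (P (i+1) - P i) := Finset.sum_le_sum hterm
    _ = C' * A * (t - s) := by
        rw [← Finset.mul_sum, Finset.sum_range_sub (fun i => P i), hP0, hPn]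
    _ < ε := by
        have hts : t - s ≤ T := by
          have := hs.1; have := ht.2; linarith
        have h1 : C' * A * (t - s) ≤ C' * A * T :=
          mul_le_mul_of_nonneg_left hts (by positivity)
        have hlt : C' * T < (C' + 1) * (T + 1) := by nlinarith
        have h2 : C' * A * T < ε := by
          calc C' * A * T = C' * T * A := by ring
            _ < (C' + 1) * (T + 1) * A := mul_lt_mul_of_pos_right hlt hApos
            _ = ε := by rw [hAdef]; field_simp
        linarith
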